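/- Every closed convex cone K ⊆ ℝ^d is Capra-convex, for any choice of source norm. -/

import Mathlib

open Classical in
noncomputable def radProj {d : ℕ} (N : EuclideanSpace ℝ (Fin d) → ℝ)
    (x : EuclideanSpace ℝ (Fin d)) : EuclideanSpace ℝ (Fin d) :=
  if x = 0 then 0 else (N x)⁻¹ • x

noncomputable def capraConj {d : ℕ} (N : EuclideanSpace ℝ (Fin d) → ℝ)
    (f : EuclideanSpace ℝ (Fin d) → EReal) (y : EuclideanSpace ℝ (Fin d)) : EReal :=
  ⨆ x : EuclideanSpace ℝ (Fin d), ((inner ℝ (radProj N x) y : ℝ) : EReal) - f x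

noncomputable def capraBiconj {d : ℕ} (N : EuclideanSpace ℝ (Fin d) → ℝ)
    (f : EuclideanSpace ℝ (Fin d) → EReal) (x : EuclideanSpace ℝ (Fin d)) : EReal :=
  ⨆ y : EuclideanSpace ℝ (Fin d), ((inner ℝ (radProj N x) y : ℝ) : EReal) - capraConj N f y

open Classical in
noncomputable def ind {d : ℕ} (X : Set (EuclideanSpace ℝ (Fin d)))
    (x : EuclideanSpace ℝ (Fin d)) : EReal :=
  if x ∈ X then 0 else ⊤

def IsCapraConvex {d : ℕ} (N : EuclideanSpace ℝ (Fin d) → ℝ)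
    (X : Set (EuclideanSpace ℝ (Fin d))) : Prop :=
  ind X = capraBiconj N (ind X)

def coneHull {d : ℕ} (A : Set (EuclideanSpace ℝ (Fin d))) : Set (EuclideanSpace ℝ (Fin d)) :=
  {y | ∃ a ∈ A, ∃ l : ℝ, 0 < l ∧ y = l • a}

theorem stmt {d : ℕ} (N : EuclideanSpace ℝ (Fin d) → ℝ)
    (hN0 : ∀ x : EuclideanSpace ℝ (Fin d), N x = 0 ↔ x = 0)
    (hNh : ∀ (a : ℝ) (x : EuclideanSpace ℝ (Fin d)), N (a • x) = |a| * N x)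
    (hNt : ∀ x y : EuclideanSpace ℝ (Fin d), N (x + y) ≤ N x + N y)
    (K : Set (EuclideanSpace ℝ (Fin d))) (hKc : IsClosed K) (hKconv : Convex ℝ K)
    (hK : ∀ l : ℝ, 0 < l → ∀ x ∈ K, l • x ∈ K) :
    IsCapraConvex N K := by
  classical
  -- basic facts about N
  have hNzero : N 0 = 0 := (hN0 0).mpr rfl
  have hNpos : ∀ x : EuclideanSpace ℝ (Fin d), x ≠ 0 → 0 < N x := by
    intro x hx
    have hnn : 0 ≤ N x := by
      have h1 : N (-x) = N x := by
        have := hNh (-1) x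
        simpa using this
      have h2 : N (x + (-x)) ≤ N x + N (-x) := hNt x (-x)
      rw [add_neg_cancel, hNzero, h1] at h2
      linarith
    rcases lt_or_eq_of_le hnn with h | h
    · exact h
    · exact absurd ((hN0 x).mp h.symm) hx
  have hrad0 : radProj N (0 : EuclideanSpace ℝ (Fin d)) = 0 := by simp [radProj]
  -- the case K = ∅
  rcases Set.eq_empty_or_nonempty K with hKe | hKne
  · subst hKe
    funext x
    have hconj : ∀ y : EuclideanSpace ℝ (Fin d), capraConj N (ind (∅ : Set (EuclideanSpace ℝ (Fin d)))) y = ⊥ := by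
      intro y
      simp only [capraConj, ind, Set.mem_empty_iff_false, if_false]
      simp [EReal.sub_top]
    simp only [ind, Set.mem_empty_iff_false, if_false, capraBiconj]
    rw [eq_comm]
    have : ∀ y : EuclideanSpace ℝ (Fin d),
        ((inner ℝ (radProj N x) y : ℝ) : EReal) - capraConj N (ind (∅ : Set (EuclideanSpace ℝ (Fin d)))) y = ⊤ := by
      intro y
      rw [hconj y]
      exact EReal.coe_sub_bot _
    simp only [this]
    exact iSup_const
  -- K nonempty : 0 ∈ K
  obtain ⟨u₀, hu₀⟩ := hKne
  have h0K : (0 : EuclideanSpace ℝ (Fin d)) ∈ K := by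
    have hmem : ∀ n : ℕ, (1 / ((n : ℝ) + 1)) • u₀ ∈ K := by
      intro n
      apply hK _ (by positivity) _ hu₀
    have htend : Filter.Tendsto (fun n : ℕ => (1 / ((n : ℝ) + 1)) • u₀)
        Filter.atTop (nhds 0) := by
      have := (tendsto_one_div_add_atTop_nhds_zero_nat (𝕜 := ℝ)).smul_const u₀
      simpa using this
    exact hKc.mem_of_tendsto htend (Filter.Eventually.of_forall hmem)
  -- radProj maps K into K
  have hradK : ∀ x ∈ K, radProj N x ∈ K := by
    intro x hx
    by_cases hx0 : x = 0
    · subst hx0; rw [hrad0]; exact h0K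
    · rw [radProj, if_neg hx0]
      exact hK _ (inv_pos.mpr (hNpos x hx0)) x hx
  -- capraConj is nonneg everywhere
  have hconj_nonneg : ∀ y, (0 : EReal) ≤ capraConj N (ind K) y := by
    intro y
    have h := le_iSup (fun x : EuclideanSpace ℝ (Fin d) =>
      ((inner ℝ (radProj N x) y : ℝ) : EReal) - ind K x) 0
    rw [hrad0] at h
    simpa [ind, h0K, capraConj] using h
  -- capraConj y ≤ 0 if the inner products with radial projections of K are ≤ 0
  have hconj_le : ∀ y : EuclideanSpace ℝ (Fin d),
      (∀ x ∈ K, (inner ℝ (radProj N x) y : ℝ) ≤ 0) → capraConj N (ind K) y ≤ 0 := by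
    intro y hy
    apply iSup_le
    intro x
    by_cases hx : x ∈ K
    · simp only [ind, hx, if_true, sub_zero]
      exact_mod_cast hy x hx
    · simp only [ind, hx, if_false, EReal.sub_top]
      exact bot_le
  funext x
  by_cases hx : x ∈ K
  · -- x ∈ K : biconjugate is 0
    simp only [ind, hx, if_true]
    rw [eq_comm]
    apply le_antisymm
    · apply iSup_le
      intro y
      have hle : ((inner ℝ (radProj N x) y : ℝ) : EReal) ≤ capraConj N (ind K) y := by
        have h := le_iSup (fun x' : EuclideanSpace ℝ (Fin d) =>
          ((inner ℝ (radProj N x') y : ℝ) : EReal) - ind K x') x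
        simpa [ind, hx, capraConj] using h
      calc ((inner ℝ (radProj N x) y : ℝ) : EReal) - capraConj N (ind K) y
          ≤ ((inner ℝ (radProj N x) y : ℝ) : EReal) - ((inner ℝ (radProj N x) y : ℝ) : EReal) :=
            EReal.sub_le_sub le_rfl hle
        _ = 0 := by rw [← EReal.coe_sub, sub_self, EReal.coe_zero]
    · have hconj0 : capraConj N (ind K) 0 = 0 := by
        apply le_antisymm
        · apply hconj_le
          intro x' _
          simp [inner_zero_right]
        · exact hconj_nonneg 0
      have h := le_iSup (fun y : EuclideanSpace ℝ (Fin d) =>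
        ((inner ℝ (radProj N x) y : ℝ) : EReal) - capraConj N (ind K) y) 0
      rw [hconj0] at h
      simpa [inner_zero_right, capraBiconj] using h
  · -- x ∉ K : biconjugate is ⊤
    simp only [ind, hx, if_false]
    rw [eq_comm]
    have hx0 : x ≠ 0 := fun h => hx (h ▸ h0K)
    set z := radProj N x with hz
    have hzdef : z = (N x)⁻¹ • x := by rw [hz, radProj, if_neg hx0]
    have hzK : z ∉ K := by
      intro hzmem
      apply hx
      have := hK (N x) (hNpos x hx0) z hzmem
      rwa [hzdef, smul_smul, mul_inv_cancel₀ (ne_of_gt (hNpos x hx0)), one_smul] at this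
    -- build the convex cone
    let C : ConvexCone ℝ (EuclideanSpace ℝ (Fin d)) :=
      { carrier := K
        smul_mem' := fun c hc {x'} hx' => hK c hc x' hx'
        add_mem' := by
          intro u hu v hv
          have h2 : (1/2 : ℝ) • u + (1/2 : ℝ) • v ∈ K :=
            hKconv hu hv (by norm_num) (by norm_num) (by norm_num)
          have := hK 2 (by norm_num) _ h2
          rwa [smul_add, smul_smul, smul_smul, (by norm_num : (2:ℝ) * (1/2) = 1),
            one_smul, one_smul] at this }
    obtain ⟨y, hy1, hy2⟩ : ∃ y : EuclideanSpace ℝ (Fin d),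
        (∀ x ∈ K, 0 ≤ (inner ℝ x y : ℝ)) ∧ (inner ℝ y z : ℝ) < 0 := by
      let P : ProperCone ℝ (EuclideanSpace ℝ (Fin d)) :=
        ⟨C.toPointedCone (ConvexCone.Pointed.of_nonempty_of_isClosed ⟨0, h0K⟩ hKc), hKc⟩
      obtain ⟨y, hy1, hy2⟩ := ProperCone.hyperplane_separation' (x₀ := z) P hzK
      exact ⟨y, hy1, by rwa [real_inner_comm]⟩
    set w : EuclideanSpace ℝ (Fin d) := -y with hw
    have hwK : ∀ u ∈ K, (inner ℝ u w : ℝ) ≤ 0 := by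
      intro u hu
      rw [hw, inner_neg_right]
      have := hy1 u hu
      linarith
    have hzw : (0 : ℝ) < (inner ℝ z w : ℝ) := by
      rw [hw, inner_neg_right]
      rw [real_inner_comm] at hy2
      linarith
    rw [EReal.eq_top_iff_forall_lt]
    intro r
    -- choose t large
    set c : ℝ := (inner ℝ z w : ℝ)
    set t : ℝ := (|r| + 1) / c with ht
    have htpos : 0 < t := div_pos (by positivity) hzw
    have hconj_tw : capraConj N (ind K) (t • w) = 0 := by
      apply le_antisymm
      · apply hconj_le
        intro x' hx'
        rw [real_inner_smul_right]
        have := hwK _ (hradK x' hx')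
        nlinarith
      · exact hconj_nonneg _
    have hle : ((inner ℝ z (t • w) : ℝ) : EReal) - capraConj N (ind K) (t • w)
        ≤ capraBiconj N (ind K) x := by
      have h := le_iSup (fun y' : EuclideanSpace ℝ (Fin d) =>
        ((inner ℝ (radProj N x) y' : ℝ) : EReal) - capraConj N (ind K) y') (t • w)
      exact h
    rw [hconj_tw, sub_zero] at hle
    refine lt_of_lt_of_le ?_ hle
    rw [EReal.coe_lt_coe_iff]
    rw [real_inner_smul_right]
    have : t * c = |r| + 1 := div_mul_cancel₀ _ (ne_of_gt hzw)
    rw [this]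
    have := abs_nonneg r
    have := le_abs_self r
    linarith
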